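/- For indices i, j with j ≤ i, the real function f(t) = ℓ(μ, B(t), ν), where B(t) is B with its (i,j)-entry replaced by t, is differentiable at t = B_{ij} and its derivative equals 𝟙_{i=j}/B_{ii} − ((ν + D)/(ν + q))·z_i·r_j, where 𝟙_{i=j} is 1 if i = j and 0 otherwise, z_i = (B·r)_i and r_j = y_j − μ_j. -/

import Mathlib

open Matrix

/-- Multivariate t log-likelihood in the Cholesky precision parametrization `Ω = Bᵀ B`:
`ℓ(μ, B, ν) = log Γ((ν+D)/2) - log Γ(ν/2) - (D/2)·log ν - (D/2)·log π + log(det B)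
  - ((ν+D)/2)·log(1 + q/ν)` with `q = ‖B(y-μ)‖²`. -/
noncomputable def tCholLL (D : ℕ) (y μ : Fin D → ℝ)
    (B : Matrix (Fin D) (Fin D) ℝ) (ν : ℝ) : ℝ :=
  Real.log (Real.Gamma ((ν + D) / 2)) - Real.log (Real.Gamma (ν / 2))
    - ((D : ℝ) / 2) * Real.log ν - ((D : ℝ) / 2) * Real.log Real.pi
    + Real.log B.det
    - ((ν + D) / 2) * Real.log (1 + (∑ k, (B.mulVec (y - μ) k) ^ 2) / ν)

/-- The matrix `B` with its `(i,j)`-entry replaced by `t`. -/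
def updEntry {D : ℕ} (B : Matrix (Fin D) (Fin D) ℝ) (i j : Fin D) (t : ℝ) :
    Matrix (Fin D) (Fin D) ℝ :=
  Matrix.of fun k l => if k = i ∧ l = j then t else B k l

/-- First partial derivative of the multivariate t log-likelihood with respect to the
entry `B_{ij}` (with `j ≤ i`): it equals
`𝟙_{i=j}/B_{ii} - ((ν + D)/(ν + q))·z_i·r_j` with `z = B(y-μ)`, `r = y - μ` and
`q = ‖B(y-μ)‖²`. -/
theorem tChol_deriv_B (D : ℕ) (hD : 1 ≤ D) (y μ : Fin D → ℝ) (ν : ℝ) (hν : 0 < ν)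
    (B : Matrix (Fin D) (Fin D) ℝ)
    (hLT : ∀ k l : Fin D, k < l → B k l = 0)
    (hdiag : ∀ k, 0 < B k k) (i j : Fin D) (hji : j ≤ i) :
    HasDerivAt (fun t : ℝ => tCholLL D y μ (updEntry B i j t) ν)
      ((if i = j then (B i i)⁻¹ else 0)
        - (ν + D) / (ν + ∑ k, (B.mulVec (y - μ) k) ^ 2) *
            (B.mulVec (y - μ) i) * (y j - μ j))
      (B i j) := by
  classical
  set r : Fin D → ℝ := y - μ with hr
  set z : Fin D → ℝ := B.mulVec r with hz
  set q : ℝ := ∑ k, (z k) ^ 2 with hq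
  set t0 : ℝ := B i j with ht0
  set c : ℝ := ∏ k ∈ Finset.univ.erase i, B k k with hc
  set q0 : ℝ := ∑ k ∈ Finset.univ.erase i, (z k) ^ 2 with hq0
  have hrj : r j = y j - μ j := by simp [hr]
  have hcpos : 0 < c := Finset.prod_pos fun k _ => hdiag k
  have hqsplit : q = z i ^ 2 + q0 := by
    rw [hq, hq0, ← Finset.add_sum_erase _ _ (Finset.mem_univ i)]
  have hqnn : (0:ℝ) ≤ q := Finset.sum_nonneg fun k _ => sq_nonneg _
  have hνq : 0 < ν + q := by linarith
  -- mulVec formula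
  have hmv : ∀ t k, (updEntry B i j t).mulVec r k =
      if k = i then z i + (t - t0) * r j else z k := by
    intro t k
    by_cases hk : k = i
    · subst hk
      simp only [if_pos rfl, Matrix.mulVec, dotProduct, updEntry, Matrix.of_apply, true_and]
      have hterm : ∀ l, (if l = j then t else B k l) * r l =
          B k l * r l + (if l = j then (t - t0) * r j else 0) := by
        intro l; by_cases hl : l = j
        · subst hl; simp [ht0]; ring
        · simp [hl]
      rw [Finset.sum_congr rfl fun l _ => hterm l, Finset.sum_add_distrib,
        Finset.sum_ite_eq' Finset.univ j]
      simp [hz, Matrix.mulVec, dotProduct]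
    · simp [updEntry, Matrix.mulVec, dotProduct, hk, hz]
  -- sum of squares formula
  have hqt : ∀ t, (∑ k, ((updEntry B i j t).mulVec r k) ^ 2) =
      (z i + (t - t0) * r j) ^ 2 + q0 := by
    intro t
    rw [← Finset.add_sum_erase _ _ (Finset.mem_univ i), hmv t i, if_pos rfl, hq0]
    congr 1
    refine Finset.sum_congr rfl fun k hk => ?_
    rw [hmv t k, if_neg (Finset.ne_of_mem_erase hk)]
  -- determinant formula
  have hdet : ∀ t, (updEntry B i j t).det = (if i = j then t else B i i) * c := by
    intro t
    have hlt : (updEntry B i j t).BlockTriangular OrderDual.toDual := by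
      intro k l hkl
      have hkl' : k < l := hkl
      simp only [updEntry, Matrix.of_apply]
      rw [if_neg, hLT k l hkl']
      rintro ⟨rfl, rfl⟩
      exact absurd hkl' (not_lt.2 hji)
    rw [Matrix.det_of_lowerTriangular _ hlt]
    by_cases hij : i = j
    · subst hij
      rw [← Finset.mul_prod_erase _ _ (Finset.mem_univ i)]
      simp only [updEntry, Matrix.of_apply, if_pos rfl, and_self, if_pos]
      congr 1
      refine Finset.prod_congr rfl fun k hk => ?_
      simp [updEntry, Finset.ne_of_mem_erase hk]
    · rw [if_neg hij]
      have hk : ∀ k, (updEntry B i j t) k k = B k k := by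
        intro k
        simp only [updEntry, Matrix.of_apply]
        rw [if_neg]
        rintro ⟨rfl, rfl⟩; exact hij rfl
      calc ∏ k, (updEntry B i j t) k k = ∏ k, B k k :=
            Finset.prod_congr rfl fun k _ => hk k
        _ = B i i * c := (Finset.mul_prod_erase _ _ (Finset.mem_univ i)).symm
  -- rewrite the function
  set C1 : ℝ := Real.log (Real.Gamma ((ν + D) / 2)) - Real.log (Real.Gamma (ν / 2))
    - ((D : ℝ) / 2) * Real.log ν - ((D : ℝ) / 2) * Real.log Real.pi with hC1
  have hfun : (fun t : ℝ => tCholLL D y μ (updEntry B i j t) ν) =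
      fun t : ℝ => C1 + Real.log ((if i = j then t else B i i) * c)
        - ((ν + D) / 2) * Real.log (1 + ((z i + (t - t0) * r j) ^ 2 + q0) / ν) := by
    funext t
    rw [tCholLL, hdet t, ← hr, hqt t, hC1]
  rw [hfun]
  -- derivative of the log-det part
  have hA : HasDerivAt (fun t : ℝ => Real.log ((if i = j then t else B i i) * c))
      (if i = j then (B i i)⁻¹ else 0) t0 := by
    by_cases hij : i = j
    · simp only [if_pos hij]
      have ht0' : t0 = B i i := by rw [ht0, hij]
      have hne : t0 * c ≠ 0 := by
        rw [ht0']; exact (mul_pos (hdiag i) hcpos).ne'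
      have h := ((hasDerivAt_id t0).mul_const c).log hne
      refine h.congr_deriv ?_; symm
      rw [ht0']
      field_simp [hcpos.ne', (hdiag i).ne']
      rfl
    · simp only [if_neg hij]
      exact hasDerivAt_const _ _
  -- derivative of the quadratic-log part
  have hlin : HasDerivAt (fun t : ℝ => z i + (t - t0) * r j) (r j) t0 := by
    have := (((hasDerivAt_id t0).sub_const t0).mul_const (r j)).const_add (z i)
    simpa using this
  have hsq : HasDerivAt (fun t : ℝ => (z i + (t - t0) * r j) ^ 2) (2 * z i * r j) t0 := by
    have h := hlin.pow 2
    refine h.congr_deriv ?_; symm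
    simp
  have hu : HasDerivAt (fun t : ℝ => 1 + ((z i + (t - t0) * r j) ^ 2 + q0) / ν)
      (2 * z i * r j / ν) t0 := ((hsq.add_const q0).div_const ν).const_add 1
  have huval : (1 + ((z i + (t0 - t0) * r j) ^ 2 + q0) / ν) = (ν + q) / ν := by
    rw [hqsplit]; field_simp; ring
  have hune : (1 + ((z i + (t0 - t0) * r j) ^ 2 + q0) / ν) ≠ 0 := by
    rw [huval]; positivity
  have hlog := (hu.log hune).const_mul ((ν + D) / 2)
  have hfull := (hA.const_add C1).sub hlog
  refine hfull.congr_deriv ?_; symm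
  rw [huval, ← hrj]
  have hν' : ν ≠ 0 := hν.ne'
  have hνq' : ν + q ≠ 0 := hνq.ne'
  congr 1
  field_simp
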